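/- arXiv:2010.03906 — 2 statements merged into one kernel-verified Lean document; each statement's English description precedes it below -/
import Mathlib

section
/- Cone Lemma: Let p ∈ ℝ^n, let F, G be m-dimensional subspaces of ℝ^n with ‖Π_F − Π_G‖ ≤ χ for some χ ≥ 0, and let σ, κ ≥ 0 satisfy (1+σ)χ < 1 and (σ + (1+σ)χ)/(1 − (1+σ)χ) ≤ κ. Then the cone C_p(σ,F) is contained in the cone C_p(κ,G). -/
open Metric Real Filter

noncomputable def pr {n : ℕ} (F : Submodule ℝ (EuclideanSpace ℝ (Fin n))) :
    EuclideanSpace ℝ (Fin n) →L[ℝ] EuclideanSpace ℝ (Fin n) :=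
  F.subtypeL.comp F.orthogonalProjection

noncomputable def graphSet {n : ℕ} (F : Submodule ℝ (EuclideanSpace ℝ (Fin n)))
    (u : F → Fᗮ) : Set (EuclideanSpace ℝ (Fin n)) :=
  Set.range fun z : F => (z : EuclideanSpace ℝ (Fin n)) + (u z : EuclideanSpace ℝ (Fin n))

noncomputable def cone {n : ℕ} (x : EuclideanSpace ℝ (Fin n)) (β : ℝ)
    (F : Submodule ℝ (EuclideanSpace ℝ (Fin n))) : Set (EuclideanSpace ℝ (Fin n)) :=
  {z | ‖pr Fᗮ (z - x)‖ ≤ β * ‖pr F (z - x)‖}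

/-- Cone Lemma: if `∠(F,G) ≤ χ` and `(σ + (1+σ)χ)/(1-(1+σ)χ) ≤ κ`, then
`C_p(σ,F) ⊆ C_p(κ,G)`. -/
theorem cone_lemma {n m : ℕ} (p : EuclideanSpace ℝ (Fin n))
    (F G : Submodule ℝ (EuclideanSpace ℝ (Fin n)))
    (hF : Module.finrank ℝ F = m) (hG : Module.finrank ℝ G = m)
    (χ σ κ : ℝ) (hχ : 0 ≤ χ) (hσ : 0 ≤ σ) (hκ : 0 ≤ κ)
    (hang : ‖pr F - pr G‖ ≤ χ)
    (hlt : (1 + σ) * χ < 1)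
    (hcond : (σ + (1 + σ) * χ) / (1 - (1 + σ) * χ) ≤ κ) :
    cone p σ F ⊆ cone p κ G := by

  intro z hz
  simp only [cone, Set.mem_setOf_eq] at hz ⊢
  set w := z - p with hw
  have hsumF : pr F w + pr Fᗮ w = w := by
    exact Submodule.starProjection_add_starProjection_orthogonal (K := F) w
  have hsumG : pr G w + pr Gᗮ w = w := by
    exact Submodule.starProjection_add_starProjection_orthogonal (K := G) w
  have ha : (0:ℝ) ≤ ‖pr F w‖ := norm_nonneg _
  have hwle : ‖w‖ ≤ (1 + σ) * ‖pr F w‖ := by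
    calc ‖w‖ = ‖pr F w + pr Fᗮ w‖ := by rw [hsumF]
    _ ≤ ‖pr F w‖ + ‖pr Fᗮ w‖ := norm_add_le _ _
    _ ≤ ‖pr F w‖ + σ * ‖pr F w‖ := by linarith
    _ = (1 + σ) * ‖pr F w‖ := by ring
  have hdiff : ‖pr F w - pr G w‖ ≤ χ * ‖w‖ := by
    calc ‖pr F w - pr G w‖ = ‖(pr F - pr G) w‖ := by simp
    _ ≤ ‖pr F - pr G‖ * ‖w‖ := (pr F - pr G).le_opNorm w
    _ ≤ χ * ‖w‖ := by
        exact mul_le_mul_of_nonneg_right hang (norm_nonneg _)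
  have hχw : χ * ‖w‖ ≤ (1 + σ) * χ * ‖pr F w‖ := by
    have := mul_le_mul_of_nonneg_left hwle hχ
    nlinarith
  have hup : ‖pr Gᗮ w‖ ≤ (σ + (1 + σ) * χ) * ‖pr F w‖ := by
    have h1 : pr Gᗮ w = pr Fᗮ w + (pr F w - pr G w) := by
      have e1 := eq_sub_of_add_eq' hsumF
      have e2 := eq_sub_of_add_eq' hsumG
      rw [e1, e2]; abel
    calc ‖pr Gᗮ w‖ = ‖pr Fᗮ w + (pr F w - pr G w)‖ := by rw [h1]
    _ ≤ ‖pr Fᗮ w‖ + ‖pr F w - pr G w‖ := norm_add_le _ _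
    _ ≤ σ * ‖pr F w‖ + (1 + σ) * χ * ‖pr F w‖ := by linarith
    _ = (σ + (1 + σ) * χ) * ‖pr F w‖ := by ring
  have hlow : (1 - (1 + σ) * χ) * ‖pr F w‖ ≤ ‖pr G w‖ := by
    have := norm_sub_norm_le (pr F w) (pr G w)
    nlinarith
  have hpos : (0:ℝ) < 1 - (1 + σ) * χ := by linarith
  have hcond' : σ + (1 + σ) * χ ≤ κ * (1 - (1 + σ) * χ) := by
    rw [div_le_iff₀ hpos] at hcond
    linarith
  calc ‖pr Gᗮ w‖ ≤ (σ + (1 + σ) * χ) * ‖pr F w‖ := hup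
  _ ≤ κ * (1 - (1 + σ) * χ) * ‖pr F w‖ := by nlinarith
  _ ≤ κ * ‖pr G w‖ := by nlinarith
end

section
/- Angle comparison on two scales: Let p₁, p₂ ∈ Σ ⊂ ℝ^n, 0 < r₁ ≤ r₂, d₁, d₂ ∈ (0, 1/2), and m-planes F₁, F₂ with |p₁ − p₂| < r₁/2. Assume (i) every point ξ ∈ (p₁ + F₁) ∩ B_{r₁}(p₁) satisfies dist(ξ, Σ ∩ B_{r₁}(p₁)) ≤ d₁ r₁, and (ii) every point of Σ ∩ B_{r₂}(p₂) lies within distance d₂ r₂ of the affine plane p₂ + F₂. Then there is a constant C̃ = C̃(m) > √2 depending only on m such that ∠(F₁, F₂) ≤ 2C̃ (d₁ + 2 d₂ r₂/r₁)/(1 − 2d₁). -/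
open Metric Real Filter
open scoped RealInnerProductSpace

section helpers

variable {n : ℕ} (F : Submodule ℝ (EuclideanSpace ℝ (Fin n)))

lemma pr_apply_mem (x : EuclideanSpace ℝ (Fin n)) : pr F x ∈ F := by
  simp [pr]

lemma pr_eq_self {v : EuclideanSpace ℝ (Fin n)} (hv : v ∈ F) : pr F v = v := by
  simp [pr, F.starProjection_eq_self_iff.mpr hv]

lemma sub_pr_mem_orth (x : EuclideanSpace ℝ (Fin n)) : x - pr F x ∈ Fᗮ :=
  F.sub_starProjection_mem_orthogonal x

lemma pr_pythagoras (x : EuclideanSpace ℝ (Fin n)) :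
    ‖x‖ ^ 2 = ‖pr F x‖ ^ 2 + ‖x - pr F x‖ ^ 2 := by
  have h : ((inner ℝ (pr F x) (x - pr F x)) : ℝ) = 0 :=
    (Submodule.mem_orthogonal F _).mp (sub_pr_mem_orth F x) _ (pr_apply_mem F x)
  have h2 := norm_add_sq_real (pr F x) (x - pr F x)
  simp only [add_sub_cancel, h] at h2
  linarith

lemma norm_pr_le (x : EuclideanSpace ℝ (Fin n)) : ‖pr F x‖ ≤ ‖x‖ := by
  have := pr_pythagoras F x
  nlinarith [norm_nonneg (pr F x), norm_nonneg x, sq_nonneg (‖x - pr F x‖)]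

lemma norm_sub_pr_le (x : EuclideanSpace ℝ (Fin n)) : ‖x - pr F x‖ ≤ ‖x‖ := by
  have := pr_pythagoras F x
  nlinarith [norm_nonneg (x - pr F x), norm_nonneg x, sq_nonneg (‖pr F x‖)]

lemma pr_min (x : EuclideanSpace ℝ (Fin n)) {w : EuclideanSpace ℝ (Fin n)} (hw : w ∈ F) :
    ‖x - pr F x‖ ≤ ‖x - w‖ := by
  have hb : pr F x - w ∈ F := F.sub_mem (pr_apply_mem F x) hw
  have h : ((inner ℝ (pr F x - w) (x - pr F x)) : ℝ) = 0 :=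
    (Submodule.mem_orthogonal F _).mp (sub_pr_mem_orth F x) _ hb
  have h2 := norm_add_sq_real (x - pr F x) (pr F x - w)
  rw [real_inner_comm, h] at h2
  have h3 : x - pr F x + (pr F x - w) = x - w := by abel
  rw [h3] at h2
  nlinarith [norm_nonneg (x - pr F x), norm_nonneg (x - w), sq_nonneg (‖pr F x - w‖)]

/-- The abstract linear-algebra lemma: if every vector of `F₁` is `ε`-close to `F₂`
(relatively), the subspaces have the same finite dimension, and `ε ≤ 1/√2`,
then the projections are `(1+√2)ε`-close. -/
lemma proj_dist_le {F₁ F₂ : Submodule ℝ (EuclideanSpace ℝ (Fin n))}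
    (hdim : Module.finrank ℝ F₁ = Module.finrank ℝ F₂) {ε : ℝ} (hε0 : 0 ≤ ε)
    (hε : ε ^ 2 ≤ 1 / 2)
    (h : ∀ v ∈ F₁, ‖v - pr F₂ v‖ ≤ ε * ‖v‖) :
    ‖pr F₁ - pr F₂‖ ≤ (1 + Real.sqrt 2) * ε := by
  -- Step 1: for v ∈ F₁, ‖v‖ ≤ √2 ‖pr F₂ v‖
  have step1 : ∀ v ∈ F₁, ‖v‖ ≤ Real.sqrt 2 * ‖pr F₂ v‖ := by
    intro v hv
    have hp := pr_pythagoras F₂ v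
    have hh := h v hv
    have hh2 : ‖v - pr F₂ v‖ ^ 2 ≤ ε ^ 2 * ‖v‖ ^ 2 := by
      nlinarith [norm_nonneg (v - pr F₂ v), norm_nonneg v]
    have h1 : ‖v‖ ^ 2 ≤ 2 * ‖pr F₂ v‖ ^ 2 := by nlinarith [sq_nonneg (‖v‖)]
    have h2 : ‖v‖ ≤ Real.sqrt (2 * ‖pr F₂ v‖ ^ 2) := by
      rw [← Real.sqrt_sq (norm_nonneg v)]
      exact Real.sqrt_le_sqrt h1
    calc ‖v‖ ≤ Real.sqrt (2 * ‖pr F₂ v‖ ^ 2) := h2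
      _ = Real.sqrt 2 * ‖pr F₂ v‖ := by
          rw [Real.sqrt_mul (by norm_num), Real.sqrt_sq (norm_nonneg _)]
  -- the map T : F₁ → F₂
  set T : F₁ →ₗ[ℝ] F₂ :=
    ((F₂.orthogonalProjection : EuclideanSpace ℝ (Fin n) →L[ℝ] F₂) :
      EuclideanSpace ℝ (Fin n) →ₗ[ℝ] F₂) ∘ₗ F₁.subtype with hT
  have hTapply : ∀ v : F₁, ((T v : F₂) : EuclideanSpace ℝ (Fin n)) = pr F₂ (v : _) := by
    intro v; simp [hT, pr]
  have hTinj : Function.Injective T := by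
    rw [← LinearMap.ker_eq_bot, Submodule.eq_bot_iff]
    intro v hv
    have h0 : pr F₂ (v : EuclideanSpace ℝ (Fin n)) = 0 := by
      rw [← hTapply]; rw [LinearMap.mem_ker] at hv; rw [hv]; simp
    have hle : ‖(v : EuclideanSpace ℝ (Fin n))‖ ≤ 0 := by
      simpa [h0] using step1 (v : EuclideanSpace ℝ (Fin n)) v.2
    exact Subtype.ext (norm_le_zero_iff.mp hle)
  have hTsurj : Function.Surjective T :=
    (LinearMap.injective_iff_surjective_of_finrank_eq_finrank hdim).mp hTinj
  -- Step 2: for w ∈ F₂, ‖w - pr F₁ w‖ ≤ √2 ε ‖w‖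
  have step2 : ∀ w ∈ F₂, ‖w - pr F₁ w‖ ≤ Real.sqrt 2 * ε * ‖w‖ := by
    intro w hw
    obtain ⟨v, hv⟩ := hTsurj ⟨w, hw⟩
    have hvw : pr F₂ (v : EuclideanSpace ℝ (Fin n)) = w := by
      rw [← hTapply, hv]
    calc ‖w - pr F₁ w‖ ≤ ‖w - (v : EuclideanSpace ℝ (Fin n))‖ := pr_min F₁ w v.2
      _ = ‖(v : EuclideanSpace ℝ (Fin n)) - pr F₂ (v : _)‖ := by rw [hvw, norm_sub_rev]
      _ ≤ ε * ‖(v : EuclideanSpace ℝ (Fin n))‖ := h _ v.2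
      _ ≤ ε * (Real.sqrt 2 * ‖pr F₂ (v : EuclideanSpace ℝ (Fin n))‖) :=
          mul_le_mul_of_nonneg_left (step1 _ v.2) hε0
      _ = Real.sqrt 2 * ε * ‖w‖ := by rw [hvw]; ring
  -- Step 3: for y ∈ F₁ᗮ, ‖pr F₂ y‖ ≤ √2 ε ‖y‖
  have step3 : ∀ y ∈ F₁ᗮ, ‖pr F₂ y‖ ≤ Real.sqrt 2 * ε * ‖y‖ := by
    intro y hy
    set w := pr F₂ y with hwdef
    have hw : w ∈ F₂ := pr_apply_mem F₂ y
    have h1 : ((inner ℝ (w) (y - w)) : ℝ) = 0 :=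
      (Submodule.mem_orthogonal F₂ _).mp (sub_pr_mem_orth F₂ y) _ hw
    have h2 : ((inner ℝ (y) (pr F₁ w)) : ℝ) = 0 := by
      rw [real_inner_comm]
      exact (Submodule.mem_orthogonal F₁ _).mp hy _ (pr_apply_mem F₁ w)
    have key : ‖w‖ ^ 2 = ((inner ℝ (y) (w - pr F₁ w)) : ℝ) := by
      have e1 : ((inner ℝ (w) (y)) : ℝ) = ‖w‖ ^ 2 := by
        have := inner_sub_right (𝕜 := ℝ) w y w
        rw [h1] at this
        have hww : ((inner ℝ (w) (w)) : ℝ) = ‖w‖ ^ 2 := real_inner_self_eq_norm_sq w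
        linarith
      have e2 := inner_sub_right (𝕜 := ℝ) y w (pr F₁ w)
      rw [h2, sub_zero] at e2
      rw [e2, real_inner_comm, e1]
    have hcs : ((inner ℝ (y) (w - pr F₁ w)) : ℝ) ≤ ‖y‖ * ‖w - pr F₁ w‖ := real_inner_le_norm y _
    have hb := step2 w hw
    have : ‖w‖ ^ 2 ≤ ‖y‖ * (Real.sqrt 2 * ε * ‖w‖) := by
      calc ‖w‖ ^ 2 = ((inner ℝ (y) (w - pr F₁ w)) : ℝ) := key
        _ ≤ ‖y‖ * ‖w - pr F₁ w‖ := hcs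
        _ ≤ ‖y‖ * (Real.sqrt 2 * ε * ‖w‖) := mul_le_mul_of_nonneg_left hb (norm_nonneg y)
    rcases eq_or_lt_of_le (norm_nonneg w) with h0 | h0
    · have : ‖w‖ = 0 := h0.symm
      rw [this]; positivity
    · have := (mul_le_mul_iff_of_pos_right h0).mp (by nlinarith : ‖w‖ * ‖w‖ ≤ Real.sqrt 2 * ε * ‖y‖ * ‖w‖)
      exact this
  -- conclude
  apply ContinuousLinearMap.opNorm_le_bound _ (by positivity)
  intro x
  have hdecomp : (pr F₁ - pr F₂) x =
      (pr F₁ x - pr F₂ (pr F₁ x)) - pr F₂ (x - pr F₁ x) := by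
    simp only [ContinuousLinearMap.sub_apply, map_sub]
    abel
  rw [hdecomp]
  calc ‖(pr F₁ x - pr F₂ (pr F₁ x)) - pr F₂ (x - pr F₁ x)‖
      ≤ ‖pr F₁ x - pr F₂ (pr F₁ x)‖ + ‖pr F₂ (x - pr F₁ x)‖ := norm_sub_le _ _
    _ ≤ ε * ‖pr F₁ x‖ + Real.sqrt 2 * ε * ‖x - pr F₁ x‖ := by
        gcongr
        · exact h _ (pr_apply_mem F₁ x)
        · exact step3 _ (sub_pr_mem_orth F₁ x)
    _ ≤ ε * ‖x‖ + Real.sqrt 2 * ε * ‖x‖ := by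
        gcongr
        · exact norm_pr_le F₁ x
        · exact norm_sub_pr_le F₁ x
    _ = (1 + Real.sqrt 2) * ε * ‖x‖ := by ring

lemma norm_pr_diff_le_two (F₁ F₂ : Submodule ℝ (EuclideanSpace ℝ (Fin n))) :
    ‖pr F₁ - pr F₂‖ ≤ 2 := by
  apply ContinuousLinearMap.opNorm_le_bound _ (by norm_num)
  intro x
  calc ‖(pr F₁ - pr F₂) x‖ ≤ ‖pr F₁ x‖ + ‖pr F₂ x‖ := by
        rw [ContinuousLinearMap.sub_apply]; exact norm_sub_le _ _
    _ ≤ ‖x‖ + ‖x‖ := add_le_add (norm_pr_le F₁ x) (norm_pr_le F₂ x)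
    _ = 2 * ‖x‖ := by ring

end helpers

set_option maxHeartbeats 1000000 in
/-- Angle comparison on two scales: there is a constant `C̃ = C̃(m) > √2`
such that whenever `Σ` is `d₁`-close from the plane side at `(p₁,F₁,r₁)` and
`d₂`-flat at `(p₂,F₂,r₂)`, with `|p₁-p₂| < r₁/2` and `r₁ ≤ r₂`, one has
`∠(F₁,F₂) ≤ 2C̃ (d₁ + 2 d₂ r₂/r₁)/(1-2d₁)`. -/
theorem angle_two_scales (m : ℕ) (hm : 1 ≤ m) :
    ∃ C : ℝ, Real.sqrt 2 < C ∧
      ∀ (n : ℕ) (Sig : Set (EuclideanSpace ℝ (Fin n)))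
        (p₁ p₂ : EuclideanSpace ℝ (Fin n)) (r₁ r₂ d₁ d₂ : ℝ)
        (F₁ F₂ : Submodule ℝ (EuclideanSpace ℝ (Fin n))),
        Module.finrank ℝ F₁ = m → Module.finrank ℝ F₂ = m →
        p₁ ∈ Sig → p₂ ∈ Sig → 0 < r₁ → r₁ ≤ r₂ →
        d₁ ∈ Set.Ioo (0 : ℝ) (1 / 2) → d₂ ∈ Set.Ioo (0 : ℝ) (1 / 2) →
        ‖p₁ - p₂‖ < r₁ / 2 →
        (∀ ξ ∈ ((fun v => p₁ + v) '' (F₁ : Set (EuclideanSpace ℝ (Fin n)))) ∩ ball p₁ r₁,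
          Metric.infDist ξ (Sig ∩ ball p₁ r₁) ≤ d₁ * r₁) →
        (∀ z ∈ Sig ∩ ball p₂ r₂,
          Metric.infDist z
            (((fun v => p₂ + v) '' (F₂ : Set (EuclideanSpace ℝ (Fin n)))) ∩ ball p₂ r₂)
            ≤ d₂ * r₂) →
        ‖pr F₁ - pr F₂‖ ≤ 2 * C * (d₁ + 2 * d₂ * r₂ / r₁) / (1 - 2 * d₁) := by
  have hsqrt2 : Real.sqrt 2 < 3 := by
    nlinarith [Real.sq_sqrt (show (0:ℝ) ≤ 2 by norm_num), Real.sqrt_nonneg 2]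
  refine ⟨3, hsqrt2, ?_⟩
  intro n Sig p₁ p₂ r₁ r₂ d₁ d₂ F₁ F₂ hF₁ hF₂ hp₁ hp₂ hr₁ hr₁₂ hd₁ hd₂ hpp h₁ h₂
  obtain ⟨hd₁0, hd₁h⟩ := hd₁
  obtain ⟨hd₂0, hd₂h⟩ := hd₂
  have hr₂ : 0 < r₂ := lt_of_lt_of_le hr₁ hr₁₂
  set K : ℝ := d₁ * r₁ + 2 * d₂ * r₂ with hKdef
  set ρ : ℝ := r₁ * (1 - 2 * d₁) / 2 with hρdef
  set γ : ℝ := r₁ / 2 - ‖p₁ - p₂‖ with hγdef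
  have hγ : 0 < γ := by rw [hγdef]; linarith
  have hρ : 0 < ρ := by
    rw [hρdef]
    have : 0 < 1 - 2 * d₁ := by linarith
    positivity
  have hρr₁ : ρ < r₁ := by rw [hρdef]; nlinarith
  have hK : 0 < K := by
    rw [hKdef]
    have := mul_pos hd₁0 hr₁
    have := mul_pos hd₂0 hr₂
    linarith
  set ε : ℝ := 2 * (d₁ + 2 * d₂ * r₂ / r₁) / (1 - 2 * d₁) with hεdef
  have hε0 : 0 < ε := by
    rw [hεdef]
    have h1 : 0 < 1 - 2 * d₁ := by linarith
    have h2 : 0 < 2 * d₂ * r₂ / r₁ := by positivity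
    positivity
  have hKρ : K = ε * ρ := by
    rw [hKdef, hεdef, hρdef]
    have h1 : (1 : ℝ) - 2 * d₁ ≠ 0 := by intro h; linarith
    field_simp
    rw [div_self (by intro h; linarith : (1:ℝ) - d₁ * 2 ≠ 0)]
  -- the key geometric estimate
  have key : ∀ u ∈ F₁, ‖u‖ ≤ ρ → ‖u - pr F₂ u‖ ≤ K := by
    intro u hu hun
    have main : ∀ δ, 0 < δ → δ < γ → ‖u - pr F₂ u‖ ≤ K + 3 * δ := by
      intro δ hδ0 hδγ
      have hξmem : (p₁ + u) ∈ ((fun v => p₁ + v) '' (F₁ : Set (EuclideanSpace ℝ (Fin n))))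
          ∩ ball p₁ r₁ := by
        refine ⟨⟨u, hu, rfl⟩, ?_⟩
        rw [mem_ball, dist_eq_norm, add_sub_cancel_left]
        exact lt_of_le_of_lt hun hρr₁
      have hne₁ : (Sig ∩ ball p₁ r₁).Nonempty := ⟨p₁, hp₁, mem_ball_self hr₁⟩
      have hlt₁ : Metric.infDist (p₁ + u) (Sig ∩ ball p₁ r₁) < d₁ * r₁ + δ :=
        lt_of_le_of_lt (h₁ _ hξmem) (by linarith)
      obtain ⟨s, hs, hds⟩ := (Metric.infDist_lt_iff hne₁).mp hlt₁
      have hdp₁p₂ : dist p₁ p₂ = r₁ / 2 - γ := by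
        rw [dist_eq_norm, hγdef]; ring
      have hsp₂ : s ∈ ball p₂ r₂ := by
        rw [mem_ball]
        have h4 : dist s p₂ ≤ dist s (p₁ + u) + dist (p₁ + u) p₁ + dist p₁ p₂ :=
          dist_triangle4 s (p₁ + u) p₁ p₂
        have e1 : dist s (p₁ + u) < d₁ * r₁ + δ := by rw [dist_comm]; exact hds
        have e2 : dist (p₁ + u) p₁ ≤ ρ := by
          rw [dist_eq_norm, add_sub_cancel_left]; exact hun
        rw [hdp₁p₂] at h4
        have : dist s p₂ < d₁ * r₁ + δ + ρ + (r₁ / 2 - γ) := by linarith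
        have hexp : d₁ * r₁ + δ + ρ + (r₁ / 2 - γ) = r₁ + δ - γ := by rw [hρdef]; ring
        rw [hexp] at this
        linarith
      have hne₂ : ((((fun v => p₂ + v) '' (F₂ : Set (EuclideanSpace ℝ (Fin n)))))
          ∩ ball p₂ r₂).Nonempty :=
        ⟨p₂, ⟨0, F₂.zero_mem, by simp⟩, mem_ball_self hr₂⟩
      have hlt₂ : Metric.infDist s _ < d₂ * r₂ + δ :=
        lt_of_le_of_lt (h₂ s ⟨hs.1, hsp₂⟩) (by linarith)
      obtain ⟨y₁, hy₁, hdy₁⟩ := (Metric.infDist_lt_iff hne₂).mp hlt₂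
      obtain ⟨w₁, hw₁, hw₁e⟩ := hy₁.1
      have hp₁ball : p₁ ∈ Sig ∩ ball p₂ r₂ := by
        refine ⟨hp₁, ?_⟩
        rw [mem_ball, dist_eq_norm]
        linarith
      have hlt₀ : Metric.infDist p₁ _ < d₂ * r₂ + δ :=
        lt_of_le_of_lt (h₂ p₁ hp₁ball) (by linarith)
      obtain ⟨y₀, hy₀, hdy₀⟩ := (Metric.infDist_lt_iff hne₂).mp hlt₀
      obtain ⟨w₀, hw₀, hw₀e⟩ := hy₀.1
      have hwF : w₁ - w₀ ∈ F₂ := F₂.sub_mem hw₁ hw₀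
      have hbound : ‖u - (w₁ - w₀)‖ ≤ K + 3 * δ := by
        have e : u - (w₁ - w₀) = ((p₁ + u) - s) + (s - y₁) - (p₁ - y₀) := by
          rw [← hw₁e, ← hw₀e]; show _ = _ + (s - (p₂ + w₁)) - (p₁ - (p₂ + w₀)); abel
        rw [e]
        have t1 : ‖(p₁ + u) - s‖ < d₁ * r₁ + δ := by rw [← dist_eq_norm]; exact hds
        have t2 : ‖s - y₁‖ < d₂ * r₂ + δ := by rw [← dist_eq_norm]; exact hdy₁
        have t3 : ‖p₁ - y₀‖ < d₂ * r₂ + δ := by rw [← dist_eq_norm]; exact hdy₀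
        calc ‖((p₁ + u) - s) + (s - y₁) - (p₁ - y₀)‖
            ≤ ‖((p₁ + u) - s) + (s - y₁)‖ + ‖p₁ - y₀‖ := norm_sub_le _ _
          _ ≤ ‖(p₁ + u) - s‖ + ‖s - y₁‖ + ‖p₁ - y₀‖ := by
              have := norm_add_le ((p₁ + u) - s) (s - y₁)
              linarith
          _ ≤ K + 3 * δ := by rw [hKdef]; linarith
      exact le_trans (pr_min F₂ u hwF) hbound
    by_contra hcon
    push_neg at hcon
    have hpos : 0 < ‖u - pr F₂ u‖ - K := by linarith
    set δ := min (γ / 2) ((‖u - pr F₂ u‖ - K) / 6) with hδdef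
    have hδ0 : 0 < δ := lt_min (by linarith) (by linarith)
    have hδγ : δ < γ := lt_of_le_of_lt (min_le_left _ _) (by linarith)
    have := main δ hδ0 hδγ
    have hδle : δ ≤ (‖u - pr F₂ u‖ - K) / 6 := min_le_right _ _
    linarith
  -- relative version
  have hforall : ∀ v ∈ F₁, ‖v - pr F₂ v‖ ≤ ε * ‖v‖ := by
    intro v hv
    rcases eq_or_ne v 0 with rfl | hv0
    · simp
    · have hvn : 0 < ‖v‖ := norm_pos_iff.mpr hv0
      set c : ℝ := ρ / ‖v‖ with hcdef
      have hc : 0 < c := by positivity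
      have hu : c • v ∈ F₁ := F₁.smul_mem _ hv
      have hnu : ‖c • v‖ = ρ := by
        rw [norm_smul, Real.norm_eq_abs, abs_of_pos hc, hcdef]
        field_simp
      have hkey := key (c • v) hu (le_of_eq hnu)
      have heq : ‖c • v - pr F₂ (c • v)‖ = c * ‖v - pr F₂ v‖ := by
        rw [map_smul, ← smul_sub, norm_smul, Real.norm_eq_abs, abs_of_pos hc]
      rw [heq, hKρ] at hkey
      -- c * a ≤ ε * ρ, c = ρ/‖v‖ ⇒ a ≤ ε ‖v‖
      have : ρ * ‖v - pr F₂ v‖ ≤ ε * ρ * ‖v‖ := by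
        have := mul_le_mul_of_nonneg_right hkey (le_of_lt hvn)
        rw [hcdef] at this
        calc ρ * ‖v - pr F₂ v‖ = ρ / ‖v‖ * ‖v - pr F₂ v‖ * ‖v‖ := by field_simp
          _ ≤ ε * ρ * ‖v‖ := this
      nlinarith
  have hgoal : (2 : ℝ) * 3 * (d₁ + 2 * d₂ * r₂ / r₁) / (1 - 2 * d₁) = 3 * ε := by
    rw [hεdef]; ring
  rw [hgoal]
  rcases le_or_gt (ε ^ 2) (1 / 2) with hcase | hcase
  · have hmain := proj_dist_le (hF₁.trans hF₂.symm) (le_of_lt hε0) hcase hforall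
    have h3 : (1 + Real.sqrt 2) * ε ≤ 3 * ε := by nlinarith [hε0, (by nlinarith [Real.sq_sqrt (show (0:ℝ) ≤ 2 by norm_num), Real.sqrt_nonneg 2] : Real.sqrt 2 ≤ 2)]
    linarith
  · have h2le : (2 : ℝ) ≤ 3 * ε := by nlinarith [hε0, hcase]
    exact le_trans (norm_pr_diff_le_two F₁ F₂) h2le
end
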